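/- Let FB denote the free band on Bool, i.e. the quotient of the free semigroup on Bool by the smallest multiplicative congruence identifying w*w with w for every element w, and let a, b ∈ FB be the images of false and true respectively. Then for every element s ∈ FB: a*s ≠ b*a, s*a ≠ a*b, b*s ≠ a*b, and s*b ≠ b*a. -/

import Mathlib

/-- The smallest multiplicative congruence on the free semigroup on `α`
identifying `w * w` with `w` for every element `w`. -/
def bandCon (α : Type*) : Con (FreeSemigroup α) :=
  conGen fun u v => u = v * v

/-- The free band on `α`: the quotient of the free semigroup on `α` by the
smallest multiplicative congruence identifying `w * w` with `w`. -/
abbrev FreeBand (α : Type*) := (bandCon α).Quotient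

/-- `Bool` with left-projection multiplication. -/
def LB := Bool

instance : Semigroup LB where
  mul x _ := x
  mul_assoc _ _ _ := rfl

/-- `Bool` with right-projection multiplication. -/
def RB := Bool

instance : Semigroup RB where
  mul _ y := y
  mul_assoc _ _ _ := rfl

/-- First letter, as a semigroup hom. -/
def firstLetter : FreeSemigroup Bool →ₙ* LB := FreeSemigroup.lift (id : Bool → LB)

/-- Last letter, as a semigroup hom. -/
def lastLetter : FreeSemigroup Bool →ₙ* RB := FreeSemigroup.lift (id : Bool → RB)

lemma bandCon_le_firstKer :
    bandCon Bool ≤ Con.ker firstLetter := by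
  apply Con.conGen_le.mpr
  rintro u v rfl
  show firstLetter (v * v) = firstLetter v
  rw [map_mul]; rfl

lemma bandCon_le_lastKer :
    bandCon Bool ≤ Con.ker lastLetter := by
  apply Con.conGen_le.mpr
  rintro u v rfl
  show lastLetter (v * v) = lastLetter v
  rw [map_mul]; rfl

lemma first_eq {x y : FreeSemigroup Bool} (h : (↑x : FreeBand Bool) = ↑y) :
    firstLetter x = firstLetter y :=
  bandCon_le_firstKer ((Con.eq _).mp h)

lemma last_eq {x y : FreeSemigroup Bool} (h : (↑x : FreeBand Bool) = ↑y) :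
    lastLetter x = lastLetter y :=
  bandCon_le_lastKer ((Con.eq _).mp h)

lemma first_mul_of (c : Bool) (w : FreeSemigroup Bool) :
    firstLetter (FreeSemigroup.of c * w) = c := by
  rw [map_mul]
  show firstLetter (FreeSemigroup.of c) = c
  simp [firstLetter]
  rfl

lemma last_mul_of (c : Bool) (w : FreeSemigroup Bool) :
    lastLetter (w * FreeSemigroup.of c) = c := by
  rw [map_mul]
  show lastLetter (FreeSemigroup.of c) = c
  simp [lastLetter]
  rfl

/-- In the free band on `Bool`, with `a`, `b` the images of `false`, `true`,
for every element `s`: `a*s ≠ b*a`, `s*a ≠ a*b`, `b*s ≠ a*b`, and `s*b ≠ b*a`. -/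
theorem freeBand_no_two_letter_generalizer (s : FreeBand Bool) :
    letI a : FreeBand Bool := (FreeSemigroup.of false : FreeSemigroup Bool)
    letI b : FreeBand Bool := (FreeSemigroup.of true : FreeSemigroup Bool)
    a * s ≠ b * a ∧ s * a ≠ a * b ∧ b * s ≠ a * b ∧ s * b ≠ b * a := by
  induction s using Con.induction_on with
  | H w =>
    refine ⟨fun h => ?_, fun h => ?_, fun h => ?_, fun h => ?_⟩
    · have := first_eq (x := FreeSemigroup.of false * w)
        (y := FreeSemigroup.of true * FreeSemigroup.of false) h
      rw [first_mul_of, first_mul_of] at this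
      exact Bool.noConfusion this
    · have := last_eq (x := w * FreeSemigroup.of false)
        (y := FreeSemigroup.of false * FreeSemigroup.of true) h
      rw [last_mul_of, last_mul_of] at this
      exact Bool.noConfusion this
    · have := first_eq (x := FreeSemigroup.of true * w)
        (y := FreeSemigroup.of false * FreeSemigroup.of true) h
      rw [first_mul_of, first_mul_of] at this
      exact Bool.noConfusion this
    · have := last_eq (x := w * FreeSemigroup.of true)
        (y := FreeSemigroup.of true * FreeSemigroup.of false) h
      rw [last_mul_of, last_mul_of] at this
      exact Bool.noConfusion this
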